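/- arXiv:0805.0480 — 2 statements merged into one kernel-verified Lean document; each statement's English description precedes it below -/
import Mathlib

section
/- Let H be a finite connected graph with at least 3 vertices, let v be a vertex of degree 1 in H (a pendant vertex), and let H' be the graph obtained from H by deleting v and its unique incident edge. Then λ_RW(H') ≥ λ_RW(H), i.e., removing a pendant edge cannot decrease the smallest nonzero Laplacian eigenvalue. -/
open Finset Filter Real

noncomputable def lapGap {V : Type*} [Fintype V] [DecidableEq V] (G : SimpleGraph V) : ℝ :=
  letI := Classical.decRel G.Adj
  sInf {μ : ℝ | 0 < μ ∧ ∃ f : V → ℝ, f ≠ 0 ∧ (G.lapMatrix ℝ).mulVec f = μ • f}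

noncomputable def interchangeGen {V : Type*} [Fintype V] [DecidableEq V] (G : SimpleGraph V) :
    Matrix (Equiv.Perm V) (Equiv.Perm V) ℝ :=
  letI := Classical.decRel G.Adj
  fun σ τ =>
    if σ = τ then -((((Finset.univ : Finset (V × V)).filter (fun p => G.Adj p.1 p.2)).card : ℝ)) / 2
    else (((Finset.univ : Finset (V × V)).filter
      (fun p => G.Adj p.1 p.2 ∧ τ = σ * Equiv.swap p.1 p.2)).card : ℝ) / 2

noncomputable def ipGap {V : Type*} [Fintype V] [DecidableEq V] (G : SimpleGraph V) : ℝ :=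
  sInf {lam : ℝ | 0 < lam ∧ ∃ f : Equiv.Perm V → ℝ, f ≠ 0 ∧
    (interchangeGen G).mulVec f = (-lam) • f}

noncomputable def boxGraph (d L : ℕ) : SimpleGraph (Fin d → Fin (L + 1)) :=
  SimpleGraph.fromRel (fun x y => ∃ i, ((x i : ℕ) + 1 = y i ∨ (y i : ℕ) + 1 = x i) ∧
    ∀ j, j ≠ i → x j = y j)

section Aux

open Matrix

variable {W : Type*} [Fintype W] [DecidableEq W]

/-- The set of positive eigenvalues of the Laplacian. -/
def posEigen (G : SimpleGraph W) [DecidableRel G.Adj] : Set ℝ :=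
  {μ : ℝ | 0 < μ ∧ ∃ f : W → ℝ, f ≠ 0 ∧ (G.lapMatrix ℝ).mulVec f = μ • f}

lemma lapGap_eq (G : SimpleGraph W) [inst : DecidableRel G.Adj] :
    lapGap G = sInf (posEigen G) := by
  unfold lapGap posEigen
  rw [Subsingleton.elim (Classical.decRel G.Adj) inst]

lemma bddBelow_posEigen (G : SimpleGraph W) [DecidableRel G.Adj] : BddBelow (posEigen G) :=
  ⟨0, fun _ hμ => hμ.1.le⟩

lemma sum_lapMatrix_mulVec (G : SimpleGraph W) [DecidableRel G.Adj] (x : W → ℝ) :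
    ∑ u, (G.lapMatrix ℝ *ᵥ x) u = 0 := by
  have hsym : (G.lapMatrix ℝ).IsSymm := SimpleGraph.isSymm_lapMatrix (R := ℝ) G
  have hrow : ∀ b, ∑ u, G.lapMatrix ℝ b u = 0 := by
    intro b
    have h := congrFun (G.lapMatrix_mulVec_const_eq_zero (R := ℝ)) b
    simpa [Matrix.mulVec, dotProduct] using h
  calc ∑ u, (G.lapMatrix ℝ *ᵥ x) u = ∑ u, ∑ b, G.lapMatrix ℝ u b * x b := rfl
    _ = ∑ b, ∑ u, G.lapMatrix ℝ u b * x b := Finset.sum_comm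
    _ = ∑ b, (∑ u, G.lapMatrix ℝ b u) * x b := by
        refine Finset.sum_congr rfl fun b _ => ?_
        rw [Finset.sum_mul]
        refine Finset.sum_congr rfl fun u _ => ?_
        rw [hsym.apply b u]
    _ = 0 := by simp [hrow]

/-- Variational bound: for mean-zero `f`, `lapGap G · ‖f‖² ≤ fᵀ L f`. -/
lemma lapGap_mul_le (G : SimpleGraph W) [inst : DecidableRel G.Adj] (hG : G.Connected)
    (f : W → ℝ) (hsum : ∑ u, f u = 0) :
    lapGap G * (∑ u, f u ^ 2) ≤ f ⬝ᵥ (G.lapMatrix ℝ *ᵥ f) := by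
  have hgap : ∀ μ ∈ posEigen G, lapGap G ≤ μ := by
    intro μ hμ
    rw [lapGap_eq G]
    exact csInf_le (bddBelow_posEigen G) hμ
  have hne : Nonempty W := hG.nonempty
  set L := G.lapMatrix ℝ with hLdef
  have hpsd : L.PosSemidef := SimpleGraph.posSemidef_lapMatrix ℝ G
  have hH : L.IsHermitian := hpsd.1
  set b := hH.eigenvectorBasis with hb
  set lam := hH.eigenvalues with hlam
  set F : EuclideanSpace ℝ W := (WithLp.equiv 2 (W → ℝ)).symm f with hF
  set c : W → ℝ := fun i => b.repr F i with hc
  have hci : ∀ i, c i = ⇑(b i) ⬝ᵥ f := by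
    intro i
    rw [hc]
    simp only [OrthonormalBasis.repr_apply_apply]
    rw [EuclideanSpace.inner_eq_star_dotProduct]
    simp [dotProduct, hF, mul_comm]
  have h1 : ∑ i, c i ^ 2 = ∑ u, f u ^ 2 := by
    have h := b.repr.inner_map_map F F
    rw [PiLp.inner_apply, PiLp.inner_apply] at h
    simp only [RCLike.inner_apply, starRingEnd_apply, star_trivial] at h
    calc ∑ i, c i ^ 2 = ∑ i, b.repr F i * b.repr F i := by
          refine Finset.sum_congr rfl fun i _ => ?_; rw [hc]; ring
      _ = ∑ u, F u * F u := h
      _ = ∑ u, f u ^ 2 := by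
          refine Finset.sum_congr rfl fun u _ => ?_
          simp [hF, sq]
  have hmv : ∀ i, L *ᵥ ⇑(b i) = lam i • ⇑(b i) := fun i => hH.mulVec_eigenvectorBasis i
  have hsym : L.IsSymm := SimpleGraph.isSymm_lapMatrix (R := ℝ) G
  have h2 : f ⬝ᵥ (L *ᵥ f) = ∑ i, lam i * c i ^ 2 := by
    set LF : EuclideanSpace ℝ W := (WithLp.equiv 2 (W → ℝ)).symm (L *ᵥ f) with hLF
    have e4 : ∀ i, b.repr LF i = lam i * c i := by
      intro i
      rw [OrthonormalBasis.repr_apply_apply, EuclideanSpace.inner_eq_star_dotProduct]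
      have : dotProduct LF.ofLp (star (b i).ofLp)
          = ⇑(b i) ⬝ᵥ (L *ᵥ f) := by simp [hLF, dotProduct, mul_comm]
      rw [this, Matrix.dotProduct_mulVec, ← hsym, Matrix.vecMul_transpose, hmv i,
        smul_dotProduct, ← hci i]
      simp
    have e3 := b.repr.inner_map_map F LF
    rw [PiLp.inner_apply, PiLp.inner_apply] at e3
    simp only [RCLike.inner_apply, starRingEnd_apply, star_trivial] at e3
    calc f ⬝ᵥ (L *ᵥ f) = ∑ u, F u * LF u := by
          simp [hF, hLF, dotProduct]
      _ = ∑ i, b.repr F i * b.repr LF i := by have := e3.symm; simpa only [mul_comm] using this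
      _ = ∑ i, lam i * c i ^ 2 := by
          refine Finset.sum_congr rfl fun i _ => ?_
          rw [e4 i]
          have hcc : b.repr F i = c i := rfl
          rw [hcc]; ring
  have h3 : ∀ i, lam i = 0 → c i = 0 := by
    intro i h0
    have hz : Matrix.toLin' L ⇑(b i) = 0 := by
      rw [Matrix.toLin'_apply, hmv i, h0, zero_smul]
    have hconst := (G.lapMatrix_mulVec_eq_zero_iff_forall_reachable (x := ⇑(b i))).mp (by rwa [Matrix.toLin'_apply] at hz)
    obtain u0 := Classical.arbitrary W
    rw [hci i]
    calc (⇑(b i) ⬝ᵥ f) = ∑ u, (⇑(b i) : W → ℝ) u * f u := rfl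
      _ = ∑ u, (⇑(b i) : W → ℝ) u0 * f u :=
          Finset.sum_congr rfl fun u _ => by rw [hconst u u0 (hG.preconnected u u0)]
      _ = (⇑(b i) : W → ℝ) u0 * ∑ u, f u := by rw [Finset.mul_sum]
      _ = 0 := by rw [hsum, mul_zero]
  have h4 : ∀ i, lapGap G * c i ^ 2 ≤ lam i * c i ^ 2 := by
    intro i
    rcases (hpsd.eigenvalues_nonneg i).eq_or_lt with h0 | hpos
    · rw [h3 i h0.symm]; simp
    · have hbne : ⇑(b i) ≠ 0 := by
        intro h
        exact b.orthonormal.ne_zero i (by ext u; exact congrFun h u)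
      have hmem : lam i ∈ posEigen G := ⟨hpos, ⇑(b i), hbne, hmv i⟩
      exact mul_le_mul_of_nonneg_right (hgap _ hmem) (sq_nonneg _)
  calc lapGap G * ∑ u, f u ^ 2 = ∑ i, lapGap G * c i ^ 2 := by rw [← h1, Finset.mul_sum]
    _ ≤ ∑ i, lam i * c i ^ 2 := Finset.sum_le_sum fun i _ => h4 i
    _ = f ⬝ᵥ (L *ᵥ f) := h2.symm

end Aux

open Matrix in
theorem stmt8 {V : Type*} [Fintype V] [DecidableEq V] (G : SimpleGraph V)
    [DecidableRel G.Adj] (hG : G.Connected) (hcard : 3 ≤ Fintype.card V)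
    (v : V) (hdeg : G.degree v = 1) :
    lapGap G ≤ lapGap (G.induce {u : V | u ≠ v}) := by
  classical
  set s : Set V := {u : V | u ≠ v} with hs
  set G' := G.induce s with hG'def
  letI instD : DecidableRel G'.Adj := Classical.decRel _
  have hdeg' : (G.neighborFinset v).card = 1 := hdeg
  obtain ⟨w, hwnb⟩ := Finset.card_eq_one.mp hdeg'
  have hadj_vw : G.Adj v w := by
    rw [← SimpleGraph.mem_neighborFinset, hwnb]; exact Finset.mem_singleton_self w
  have huniq : ∀ x, G.Adj v x → x = w := fun x hx => by
    have h := (SimpleGraph.mem_neighborFinset G v x).mpr hx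
    rwa [hwnb, Finset.mem_singleton] at h
  have hw_ne : w ≠ v := hadj_vw.ne'
  have hw_mem : w ∈ s := hw_ne
  -- a third vertex
  have hexu : ∃ u : V, u ≠ v ∧ u ≠ w := by
    by_contra h
    push_neg at h
    have hsub : (Finset.univ : Finset V) ⊆ {v, w} := fun x _ => by
      by_cases hx : x = v
      · simp [hx]
      · simp [h x hx]
    have h1 := Finset.card_le_card hsub
    rw [Finset.card_univ] at h1
    have h2 : ({v, w} : Finset V).card ≤ 2 := by
      refine (Finset.card_insert_le _ _).trans ?_
      simp
    omega
  obtain ⟨u, huv, huw⟩ := hexu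
  -- u has a neighbor x ≠ v
  have hux : ∃ x, x ≠ v ∧ G.Adj u x := by
    obtain ⟨p⟩ := hG.preconnected u v
    cases p with
    | nil => exact absurd rfl huv
    | @cons _ x _ hadj q =>
      refine ⟨x, fun hxv => ?_, hadj⟩
      subst hxv
      exact huw (huniq u hadj.symm)
  obtain ⟨x, hxv, hadjux⟩ := hux
  have hadj' : G'.Adj ⟨u, huv⟩ ⟨x, hxv⟩ := hadjux
  -- posEigen G' is nonempty
  have hpsd' : (G'.lapMatrix ℝ).PosSemidef := SimpleGraph.posSemidef_lapMatrix ℝ G'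
  have hne0 : G'.lapMatrix ℝ ≠ 0 := by
    intro h0
    have hentry : (G'.lapMatrix ℝ) ⟨u, huv⟩ ⟨u, huv⟩ = 0 := by rw [h0]; rfl
    rw [SimpleGraph.lapMatrix, Matrix.sub_apply] at hentry
    rw [show (G'.degMatrix ℝ) ⟨u, huv⟩ ⟨u, huv⟩ = (G'.degree ⟨u, huv⟩ : ℝ) from
      Matrix.diagonal_apply_eq _ _] at hentry
    rw [SimpleGraph.adjMatrix_apply, if_neg (G'.irrefl)] at hentry
    have hdegpos : 0 < G'.degree ⟨u, huv⟩ :=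
      (SimpleGraph.degree_pos_iff_exists_adj G' _).mpr ⟨_, hadj'⟩
    rw [sub_zero] at hentry
    exact absurd hentry (by positivity)
  obtain ⟨f0, t, ht0, hf0, heig0⟩ := hpsd'.1.exists_eigenvector_of_ne_zero hne0
  have hsum0 : 0 < ∑ a, f0 a ^ 2 := by
    obtain ⟨a, ha⟩ := Function.ne_iff.mp hf0
    exact Finset.sum_pos' (fun a _ => sq_nonneg _) ⟨a, Finset.mem_univ a, pow_two_pos_of_ne_zero ha⟩
  have ht : 0 < t := by
    rcases ht0.lt_or_gt with h | h
    · exfalso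
      have hquad := hpsd'.dotProduct_mulVec_nonneg f0
      rw [heig0] at hquad
      simp only [dotProduct_smul, smul_eq_mul, star_trivial, RCLike.re_to_real] at hquad
      have hdp : f0 ⬝ᵥ f0 = ∑ a, f0 a ^ 2 := by
        simp [dotProduct, sq]
      rw [hdp] at hquad
      nlinarith
    · exact h
  have hNe : (posEigen G').Nonempty := ⟨t, ht, f0, hf0, heig0⟩
  -- main bound
  rw [lapGap_eq G']
  refine le_csInf hNe ?_
  rintro μ ⟨hμ, f', hf', heig⟩
  have hvmem : ∀ a : ↥s, (a : V) ≠ v := fun a => a.2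
  -- sum of f' is zero
  have hsumf' : ∑ a, f' a = 0 := by
    have hsumLap : ∑ a, ((G'.lapMatrix ℝ) *ᵥ f') a = 0 := sum_lapMatrix_mulVec G' f'
    rw [heig] at hsumLap
    simp only [Pi.smul_apply, smul_eq_mul, ← Finset.mul_sum] at hsumLap
    exact (mul_eq_zero.mp hsumLap).resolve_left (ne_of_gt hμ)
  set fw : ℝ := f' ⟨w, hw_mem⟩ with hfw
  set fe : V → ℝ := fun z => if h : z = v then fw else f' ⟨z, h⟩ with hfe
  have hfe_sub : ∀ a : ↥s, fe ↑a = f' a := by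
    intro a
    rw [hfe]
    simp only [dif_neg (hvmem a)]
  have hfe_v : fe v = fw := by rw [hfe]; simp
  have hfe_w : fe w = fw := by
    rw [hfe]; simp only [dif_neg hw_ne]; rfl
  have hsub_sum : ∀ (h : V → ℝ), ∑ z ∈ Finset.univ.erase v, h z = ∑ a : ↥s, h ↑a := by
    intro h
    refine Finset.sum_subtype _ (fun z => ?_) h
    simp [hs, Finset.mem_erase]
  have hsum_fe : ∑ z, fe z = fw := by
    calc ∑ z, fe z = fe v + ∑ z ∈ Finset.univ.erase v, fe z :=
          (Finset.add_sum_erase _ fe (Finset.mem_univ v)).symm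
      _ = fw + ∑ a : ↥s, f' a := by
          rw [hfe_v, hsub_sum fe]
          exact congrArg _ (Finset.sum_congr rfl fun a _ => hfe_sub a)
      _ = fw := by rw [hsumf', add_zero]
  have hsum_fe2 : ∑ z, fe z ^ 2 = fw ^ 2 + ∑ a, f' a ^ 2 := by
    calc ∑ z, fe z ^ 2 = fe v ^ 2 + ∑ z ∈ Finset.univ.erase v, fe z ^ 2 :=
          (Finset.add_sum_erase _ (fun z => fe z ^ 2) (Finset.mem_univ v)).symm
      _ = fw ^ 2 + ∑ a : ↥s, f' a ^ 2 := by
          rw [hfe_v, hsub_sum (fun z => fe z ^ 2)]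
          exact congrArg _ (Finset.sum_congr rfl fun a _ => by rw [hfe_sub a])
  set N : ℝ := (Fintype.card V : ℝ) with hN
  have hN3 : (3 : ℝ) ≤ N := by rw [hN]; exact_mod_cast hcard
  have hNpos : 0 < N := by linarith
  set cst : ℝ := fw / N with hcst
  set g : V → ℝ := fun z => fe z - cst with hg
  have hsumg : ∑ z, g z = 0 := by
    rw [hg]
    rw [Finset.sum_sub_distrib, hsum_fe, Finset.sum_const, Finset.card_univ, nsmul_eq_mul, hcst]
    rw [← hN]
    field_simp; ring
  have hsumg2 : ∑ z, g z ^ 2 = ∑ a, f' a ^ 2 + fw ^ 2 - fw ^ 2 / N := by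
    have hexp : ∀ z : V, (fe z - cst) ^ 2 = fe z ^ 2 - 2 * cst * fe z + cst ^ 2 := fun z => by ring
    rw [hg]
    simp only [hexp]
    rw [Finset.sum_add_distrib, Finset.sum_sub_distrib, ← Finset.mul_sum, hsum_fe, hsum_fe2,
      Finset.sum_const, Finset.card_univ, nsmul_eq_mul, ← hN, hcst]
    field_simp
    ring
  have hposf' : 0 < ∑ a, f' a ^ 2 := by
    obtain ⟨a, ha⟩ := Function.ne_iff.mp hf'
    exact Finset.sum_pos' (fun a _ => sq_nonneg _) ⟨a, Finset.mem_univ a, pow_two_pos_of_ne_zero ha⟩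
  have hge : ∑ a, f' a ^ 2 ≤ ∑ z, g z ^ 2 := by
    rw [hsumg2]
    have h1 : fw ^ 2 / N ≤ fw ^ 2 := by
      rw [div_le_iff₀ hNpos]
      nlinarith [sq_nonneg fw]
    linarith
  -- quadratic form equality
  have hQ : g ⬝ᵥ (G.lapMatrix ℝ *ᵥ g) = μ * ∑ a, f' a ^ 2 := by
    rw [← Matrix.toLinearMap₂'_apply', SimpleGraph.lapMatrix_toLinearMap₂']
    have hGdiff : ∀ y z : V, g y - g z = fe y - fe z := fun y z => by rw [hg]; ring
    have hrow0 : ∀ j, (if G.Adj v j then (g v - g j) ^ 2 else 0) = 0 := by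
      intro j
      by_cases hj : G.Adj v j
      · rw [if_pos hj, huniq j hj, hGdiff, hfe_v, hfe_w]; ring
      · rw [if_neg hj]
    have hcol0 : ∀ i, (if G.Adj i v then (g i - g v) ^ 2 else 0) = 0 := by
      intro i
      by_cases hi : G.Adj i v
      · rw [if_pos hi, huniq i hi.symm, hGdiff, hfe_w, hfe_v]; ring
      · rw [if_neg hi]
    have hsplit : (∑ i : V, ∑ j : V, if G.Adj i j then (g i - g j) ^ 2 else 0)
        = ∑ a : ↥s, ∑ b : ↥s, if G'.Adj a b then (f' a - f' b) ^ 2 else 0 := by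
      calc (∑ i : V, ∑ j : V, if G.Adj i j then (g i - g j) ^ 2 else 0)
          = ∑ i ∈ Finset.univ.erase v, ∑ j : V, (if G.Adj i j then (g i - g j) ^ 2 else 0) :=
            (Finset.sum_erase (f := fun i => ∑ j : V, if G.Adj i j then (g i - g j) ^ 2 else 0)
              _ (Finset.sum_eq_zero fun j _ => hrow0 j)).symm
        _ = ∑ i ∈ Finset.univ.erase v, ∑ j ∈ Finset.univ.erase v,
              (if G.Adj i j then (g i - g j) ^ 2 else 0) :=
            Finset.sum_congr rfl fun i _ =>
              (Finset.sum_erase (f := fun j => if G.Adj i j then (g i - g j) ^ 2 else 0)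
                _ (hcol0 i)).symm
        _ = ∑ a : ↥s, ∑ j ∈ Finset.univ.erase v, (if G.Adj ↑a j then (g ↑a - g j) ^ 2 else 0) :=
            hsub_sum _
        _ = ∑ a : ↥s, ∑ b : ↥s, (if G.Adj ↑a ↑b then (g ↑a - g ↑b) ^ 2 else 0) :=
            Finset.sum_congr rfl fun a _ => hsub_sum _
        _ = ∑ a : ↥s, ∑ b : ↥s, if G'.Adj a b then (f' a - f' b) ^ 2 else 0 := by
            refine Finset.sum_congr rfl fun a _ => Finset.sum_congr rfl fun b _ => ?_
            rw [hGdiff, hfe_sub a, hfe_sub b]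
            refine if_congr ?_ rfl rfl
            rw [hG'def]
            exact (SimpleGraph.comap_adj).symm
    rw [hsplit, ← SimpleGraph.lapMatrix_toLinearMap₂' (R := ℝ) G' f', Matrix.toLinearMap₂'_apply',
      heig, dotProduct_smul, smul_eq_mul]
    congr 1
    simp [dotProduct, sq]
  -- conclude
  have hmain := lapGap_mul_le G hG g hsumg
  rw [hQ] at hmain
  have h2 : μ * ∑ a, f' a ^ 2 ≤ μ * ∑ z, g z ^ 2 := mul_le_mul_of_nonneg_left hge hμ.le
  have hposg : 0 < ∑ z, g z ^ 2 := lt_of_lt_of_le hposf' hge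
  exact le_of_mul_le_mul_right (hmain.trans h2) hposg
end

section
/- Let G be a connected graph on vertices {1,…,n} and let Q be the generator of the interchange process on G. Suppose f : S_n → ℝ satisfies Qf = -λf with λ > 0, and suppose there exist m, k with ∑_{π : π(m)=k} f(π) ≠ 0. Then λ is an eigenvalue of the graph Laplacian of G, and hence λ ≥ λ_RW(G). -/
open Finset Filter Real

theorem stmt13 (n : ℕ) (G : SimpleGraph (Fin n)) (hG : G.Connected)
    (f : Equiv.Perm (Fin n) → ℝ) (lam : ℝ) (hlam : 0 < lam)
    (hf : (interchangeGen G).mulVec f = (-lam) • f)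
    (m k : Fin n)
    (hne : ∑ σ ∈ univ.filter (fun σ : Equiv.Perm (Fin n) => σ m = k), f σ ≠ 0) :
    (∃ h : Fin n → ℝ, h ≠ 0 ∧
      (letI := Classical.decRel G.Adj; (G.lapMatrix ℝ).mulVec h) = lam • h) ∧
    lapGap G ≤ lam := by
  letI := Classical.decRel G.Adj
  set E := (univ : Finset (Fin n × Fin n)).filter (fun p => G.Adj p.1 p.2) with hE
  -- pointwise eigen-equation
  have key : ∀ σ : Equiv.Perm (Fin n),
      ∑ p ∈ E, f (σ * Equiv.swap p.1 p.2) = (E.card : ℝ) * f σ - 2 * lam * f σ := by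
    intro σ
    have h1 := congrFun hf σ
    simp only [Matrix.mulVec, dotProduct, interchangeGen, Pi.smul_apply, smul_eq_mul] at h1
    have hQ : ∀ τ : Equiv.Perm (Fin n),
        (if σ = τ then -((E.card : ℝ)) / 2
         else ((univ.filter (fun p : Fin n × Fin n => G.Adj p.1 p.2 ∧ τ = σ * Equiv.swap p.1 p.2)).card : ℝ) / 2)
        = (if σ = τ then -((E.card : ℝ)) / 2 else 0)
          + ((E.filter (fun p => σ * Equiv.swap p.1 p.2 = τ)).card : ℝ) / 2 := by
      intro τ
      by_cases hστ : σ = τ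
      · subst hστ
        simp only [if_pos rfl]
        have : E.filter (fun p => σ * Equiv.swap p.1 p.2 = σ) = ∅ := by
          apply Finset.filter_eq_empty_iff.mpr
          intro p hp
          have hadj : G.Adj p.1 p.2 := (Finset.mem_filter.mp hp).2
          intro hcon
          exact hadj.ne (by simpa using hcon)
        rw [this]
        simp
      · simp only [if_neg hστ, zero_add, hE, Finset.filter_filter]
        have : (univ.filter (fun p : Fin n × Fin n => G.Adj p.1 p.2 ∧ τ = σ * Equiv.swap p.1 p.2))
            = univ.filter (fun a : Fin n × Fin n => G.Adj a.1 a.2 ∧ σ * Equiv.swap a.1 a.2 = τ) := by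
          ext p
          simp [eq_comm, and_comm]
        rw [this]
    have h2 : ∑ τ : Equiv.Perm (Fin n),
        ((if σ = τ then -((E.card : ℝ)) / 2 else 0)
          + ((E.filter (fun p => σ * Equiv.swap p.1 p.2 = τ)).card : ℝ) / 2) * f τ
        = -lam * f σ := by
      rw [← h1]
      apply Finset.sum_congr rfl
      intro τ _
      rw [← hQ τ]
    rw [Finset.sum_congr rfl (fun τ _ => add_mul _ _ _), Finset.sum_add_distrib] at h2
    have h3 : ∑ τ : Equiv.Perm (Fin n),
        (if σ = τ then -((E.card : ℝ)) / 2 else 0) * f τ = -((E.card : ℝ)) / 2 * f σ := by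
      simp [Finset.sum_ite_eq]
    have h4 : ∑ τ : Equiv.Perm (Fin n),
        ((E.filter (fun p => σ * Equiv.swap p.1 p.2 = τ)).card : ℝ) / 2 * f τ
        = (∑ p ∈ E, f (σ * Equiv.swap p.1 p.2)) / 2 := by
      rw [← Finset.sum_fiberwise_of_maps_to (g := fun p : Fin n × Fin n => σ * Equiv.swap p.1 p.2)
        (t := (univ : Finset (Equiv.Perm (Fin n)))) (fun _ _ => Finset.mem_univ _)
        (f := fun p => f (σ * Equiv.swap p.1 p.2))]
      rw [Finset.sum_div]
      apply Finset.sum_congr rfl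
      intro τ _
      rw [Finset.sum_congr rfl (fun p hp => by rw [(Finset.mem_filter.mp hp).2]),
        Finset.sum_const, nsmul_eq_mul]
      ring
    rw [h3, h4] at h2
    linarith
  -- the lumped observable
  set h : Fin n → ℝ :=
    fun j => ∑ σ ∈ univ.filter (fun σ : Equiv.Perm (Fin n) => σ j = k), f σ with hh
  have hswap : ∀ a b j : Fin n,
      ∑ σ ∈ univ.filter (fun σ : Equiv.Perm (Fin n) => σ j = k), f (σ * Equiv.swap a b)
        = h (Equiv.swap a b j) := by
    intro a b j
    rw [hh]
    refine Finset.sum_nbij' (fun σ => σ * Equiv.swap a b) (fun τ => τ * Equiv.swap a b) ?_ ?_ ?_ ?_ ?_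
    · intro σ hσ
      simp only [Finset.mem_filter, Finset.mem_univ, true_and] at hσ ⊢
      simp [Equiv.Perm.mul_apply, hσ]
    · intro τ hτ
      simp only [Finset.mem_filter, Finset.mem_univ, true_and] at hτ ⊢
      simpa [Equiv.Perm.mul_apply] using hτ
    · intro σ _; simp [mul_assoc]
    · intro τ _; simp [mul_assoc]
    · intro σ _; rfl
  have hsum : ∀ j : Fin n,
      ∑ p ∈ E, h (Equiv.swap p.1 p.2 j) = (E.card : ℝ) * h j - 2 * lam * h j := by
    intro j
    calc ∑ p ∈ E, h (Equiv.swap p.1 p.2 j)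
        = ∑ p ∈ E, ∑ σ ∈ univ.filter (fun σ : Equiv.Perm (Fin n) => σ j = k),
            f (σ * Equiv.swap p.1 p.2) :=
          Finset.sum_congr rfl (fun p _ => (hswap p.1 p.2 j).symm)
      _ = ∑ σ ∈ univ.filter (fun σ : Equiv.Perm (Fin n) => σ j = k),
            ∑ p ∈ E, f (σ * Equiv.swap p.1 p.2) := Finset.sum_comm
      _ = ∑ σ ∈ univ.filter (fun σ : Equiv.Perm (Fin n) => σ j = k),
            ((E.card : ℝ) * f σ - 2 * lam * f σ) :=
          Finset.sum_congr rfl (fun σ _ => key σ)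
      _ = (E.card : ℝ) * h j - 2 * lam * h j := by
          rw [Finset.sum_sub_distrib, ← Finset.mul_sum, ← Finset.mul_sum, hh]
  have hdecomp : ∀ j : Fin n,
      ∑ p ∈ E, h (Equiv.swap p.1 p.2 j)
        = (E.card : ℝ) * h j + 2 * ∑ b ∈ G.neighborFinset j, (h b - h j) := by
    intro j
    have step1 : ∀ p ∈ E, h (Equiv.swap p.1 p.2 j)
        = h j + (if p.1 = j then h p.2 - h j else if p.2 = j then h p.1 - h j else 0) := by
      intro p hp
      have hne' : p.1 ≠ p.2 := ((Finset.mem_filter.mp hp).2).ne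
      by_cases h1 : p.1 = j
      · rw [if_pos h1, ← h1, Equiv.swap_apply_left]; ring
      · by_cases h2 : p.2 = j
        · rw [if_neg h1, if_pos h2, ← h2, Equiv.swap_apply_right]; ring
        · rw [if_neg h1, if_neg h2,
            Equiv.swap_apply_of_ne_of_ne (fun hc => h1 hc.symm) (fun hc => h2 hc.symm)]
          ring
    rw [Finset.sum_congr rfl step1, Finset.sum_add_distrib, Finset.sum_const, nsmul_eq_mul]
    congr 1
    have e1 : ∑ p ∈ E.filter (fun p => p.1 = j), (h p.2 - h j)
        = ∑ b ∈ G.neighborFinset j, (h b - h j) := by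
      refine Finset.sum_nbij' (fun p => p.2) (fun b => (j, b)) ?_ ?_ ?_ ?_ ?_
      · intro p hp
        simp only [hE, Finset.mem_filter, Finset.mem_univ, true_and] at hp
        rcases hp with ⟨hadj, h1⟩
        simp [SimpleGraph.mem_neighborFinset, ← h1, hadj]
      · intro b hb
        simp only [SimpleGraph.mem_neighborFinset] at hb
        simp [hE, hb]
      · intro p hp
        simp only [hE, Finset.mem_filter] at hp
        exact Prod.ext hp.2.symm rfl
      · intro b _; rfl
      · intro p _; rfl
    have e2 : ∑ p ∈ (E.filter (fun p => ¬ p.1 = j)).filter (fun p => p.2 = j), (h p.1 - h j)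
        = ∑ b ∈ G.neighborFinset j, (h b - h j) := by
      refine Finset.sum_nbij' (fun p => p.1) (fun b => (b, j)) ?_ ?_ ?_ ?_ ?_
      · intro p hp
        simp only [hE, Finset.mem_filter, Finset.mem_univ, true_and] at hp
        rcases hp with ⟨⟨hadj, -⟩, h2⟩
        rw [h2] at hadj
        simp [SimpleGraph.mem_neighborFinset, hadj.symm]
      · intro b hb
        simp only [SimpleGraph.mem_neighborFinset] at hb
        simp [hE, hb.symm, hb.symm.ne]
      · intro p hp
        simp only [hE, Finset.mem_filter] at hp
        exact Prod.ext rfl hp.2.symm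
      · intro b _; rfl
      · intro p _; rfl
    calc ∑ p ∈ E, (if p.1 = j then h p.2 - h j else if p.2 = j then h p.1 - h j else 0)
        = ∑ p ∈ E.filter (fun p => p.1 = j),
            (if p.1 = j then h p.2 - h j else if p.2 = j then h p.1 - h j else 0)
          + ∑ p ∈ E.filter (fun p => ¬ p.1 = j),
            (if p.1 = j then h p.2 - h j else if p.2 = j then h p.1 - h j else 0) :=
          (Finset.sum_filter_add_sum_filter_not E _ _).symm
      _ = ∑ p ∈ E.filter (fun p => p.1 = j), (h p.2 - h j)
          + ∑ p ∈ E.filter (fun p => ¬ p.1 = j), (if p.2 = j then h p.1 - h j else 0) := by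
          congr 1
          · exact Finset.sum_congr rfl (fun p hp => if_pos (Finset.mem_filter.mp hp).2)
          · exact Finset.sum_congr rfl (fun p hp => if_neg (Finset.mem_filter.mp hp).2)
      _ = ∑ p ∈ E.filter (fun p => p.1 = j), (h p.2 - h j)
          + ∑ p ∈ (E.filter (fun p => ¬ p.1 = j)).filter (fun p => p.2 = j), (h p.1 - h j) := by
          congr 1
          exact (Finset.sum_filter _ _).symm
      _ = 2 * ∑ b ∈ G.neighborFinset j, (h b - h j) := by
          rw [e1, e2]; ring
  have hLap : ∀ j : Fin n, (G.lapMatrix ℝ).mulVec h j = lam * h j := by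
    intro j
    rw [SimpleGraph.lapMatrix_mulVec_apply]
    have h5 := (hsum j).symm.trans (hdecomp j)
    have h6 : ∑ b ∈ G.neighborFinset j, (h b - h j)
        = (∑ b ∈ G.neighborFinset j, h b) - (G.degree j : ℝ) * h j := by
      rw [Finset.sum_sub_distrib, Finset.sum_const, nsmul_eq_mul,
        SimpleGraph.card_neighborFinset_eq_degree]
    rw [h6] at h5
    linarith
  have hne0 : h ≠ 0 := by
    intro h0
    exact hne (by simpa [hh] using congrFun h0 m)
  have hLapfun : (G.lapMatrix ℝ).mulVec h = lam • h := by
    funext j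
    rw [hLap j]
    rfl
  refine ⟨⟨h, hne0, hLapfun⟩, ?_⟩
  have hmem : lam ∈ {μ : ℝ | 0 < μ ∧ ∃ g : Fin n → ℝ, g ≠ 0 ∧
      (G.lapMatrix ℝ).mulVec g = μ • g} := ⟨hlam, h, hne0, hLapfun⟩
  exact csInf_le ⟨0, fun μ hμ => le_of_lt hμ.1⟩ hmem
end
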